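/- Fix integers r ≥ 4 and k ≥ r-2 with r(k+1) even. There is a bijection between r-sets T = {L_1,...,L_r} of non-intersecting type with |⋃ L_i| = r(k+1)/2 (up to renumbering of ground-set elements) and tuples of positive integers (a_{l,t})_{2 ≤ l < t ≤ r} with Σ_{2 ≤ l < t ≤ r} a_{l,t} = (r-2)(k+1)/2 such that the induced values a_{1,j} = k+1 - Σ_{l ∈ [r]\{1,j}} a_{l,j} are all positive. -/

import Mathlib

/-- An `r`-set of non-intersecting type (ground set `ℕ`): all members have
`k+1` elements, pairwise intersections are nonempty, triple intersections are
empty, and the union of all `r` sets equals the union of any `r-1` of them. -/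
def IsNonIntRSet (r k : ℕ) (L : Fin r → Finset ℕ) : Prop :=
  (∀ i, (L i).card = k + 1) ∧
  (∀ i j, i ≠ j → (L i ∩ L j).Nonempty) ∧
  (∀ i j l, i ≠ j → j ≠ l → i ≠ l → L i ∩ L j ∩ L l = ∅) ∧
  (∀ i : Fin r, Finset.univ.biUnion L = (Finset.univ.erase i).biUnion L)

open Finset

lemma glue_aux {ι : Type*} [Fintype ι] (Q Q' : ι → Finset ℕ)
    (hdisj : ∀ p q : ι, p ≠ q → Disjoint (Q p) (Q q))
    (hdisj' : ∀ p q : ι, p ≠ q → Disjoint (Q' p) (Q' q))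
    (hcard : ∀ p, (Q p).card = (Q' p).card) :
    ∃ σ : ℕ ≃ ℕ, ∀ p, Q' p = (Q p).image σ := by
  classical
  have e : ∀ p, {x // x ∈ Q p} ≃ {x // x ∈ Q' p} := fun p =>
    Fintype.equivOfCardEq (by simp only [Fintype.card_coe]; exact hcard p)
  let f : ℕ → ℕ := fun x =>
    if h : ∃ p, x ∈ Q p then ((e h.choose ⟨x, h.choose_spec⟩ : ℕ)) else x
  have key : ∀ (p : ι) (x : ℕ) (hx : x ∈ Q p), f x = ((e p ⟨x, hx⟩ : ℕ)) := by
    intro p x hx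
    have h : ∃ q, x ∈ Q q := ⟨p, hx⟩
    have h2 : ∀ (q : ι) (hq : x ∈ Q q), ((e q ⟨x, hq⟩ : ℕ)) = ((e p ⟨x, hx⟩ : ℕ)) := by
      intro q hq
      have hqp : q = p := by
        by_contra hne
        exact (Finset.disjoint_left.mp (hdisj _ _ hne) hq) hx
      subst hqp; rfl
    simp only [f, dif_pos h]
    exact h2 _ _
  have fmem : ∀ (p : ι) (x : ℕ), x ∈ Q p → f x ∈ Q' p := by
    intro p x hx; rw [key p x hx]; exact (e p ⟨x, hx⟩).2
  have fsurj : ∀ (p : ι) (y : ℕ), y ∈ Q' p → ∃ x ∈ Q p, f x = y := by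
    intro p y hy
    refine ⟨((e p).symm ⟨y, hy⟩ : ℕ), ((e p).symm ⟨y, hy⟩).2, ?_⟩
    rw [key p _ ((e p).symm ⟨y, hy⟩).2]
    have h3 : (⟨((e p).symm ⟨y, hy⟩ : ℕ), ((e p).symm ⟨y, hy⟩).2⟩ : {x // x ∈ Q p})
        = (e p).symm ⟨y, hy⟩ := rfl
    rw [h3, Equiv.apply_symm_apply]
  set U : Finset ℕ := Finset.univ.biUnion Q with hU
  set U' : Finset ℕ := Finset.univ.biUnion Q' with hU'
  have finj : ∀ x ∈ U, ∀ y ∈ U, f x = f y → x = y := by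
    intro x hx y hy hxy
    obtain ⟨p, -, hp⟩ := Finset.mem_biUnion.mp hx
    obtain ⟨q, -, hq⟩ := Finset.mem_biUnion.mp hy
    have hqp : q = p := by
      by_contra hne
      have h1 : f x ∈ Q' p := fmem p x hp
      have h2 : f y ∈ Q' q := fmem q y hq
      rw [hxy] at h1
      exact (Finset.disjoint_left.mp (hdisj' _ _ hne) h2) h1
    subst hqp
    have := key q x hp
    have := key q y hq
    have hee : ((e q ⟨x, hp⟩ : ℕ)) = ((e q ⟨y, hq⟩ : ℕ)) := by
      rw [← key q x hp, ← key q y hq, hxy]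
    have := (e q).injective (Subtype.coe_injective hee)
    exact congrArg Subtype.val this
  have hbij : Set.BijOn f (U : Set ℕ) (U' : Set ℕ) := by
    refine ⟨?_, ?_, ?_⟩
    · intro x hx
      obtain ⟨p, -, hp⟩ := Finset.mem_biUnion.mp hx
      exact Finset.mem_coe.mpr (Finset.mem_biUnion.mpr ⟨p, Finset.mem_univ _, fmem p x hp⟩)
    · intro x hx y hy hxy
      exact finj x hx y hy hxy
    · intro y hy
      obtain ⟨p, -, hp⟩ := Finset.mem_biUnion.mp hy
      obtain ⟨x, hx, hfx⟩ := fsurj p y hp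
      exact ⟨x, Finset.mem_coe.mpr (Finset.mem_biUnion.mpr ⟨p, Finset.mem_univ _, hx⟩), hfx⟩
  haveI i1 : Infinite ((U : Set ℕ)ᶜ : Set ℕ) :=
    Set.infinite_coe_iff.mpr (Set.Finite.infinite_compl (U.finite_toSet))
  haveI i2 : Infinite ((U' : Set ℕ)ᶜ : Set ℕ) :=
    Set.infinite_coe_iff.mpr (Set.Finite.infinite_compl (U'.finite_toSet))
  obtain ⟨d1⟩ := nonempty_denumerable ((U : Set ℕ)ᶜ : Set ℕ)
  obtain ⟨d2⟩ := nonempty_denumerable ((U' : Set ℕ)ᶜ : Set ℕ)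
  let ec : ((U : Set ℕ)ᶜ : Set ℕ) ≃ ((U' : Set ℕ)ᶜ : Set ℕ) :=
    (@Denumerable.eqv _ d1).trans (@Denumerable.eqv _ d2).symm
  let eqS : ((U : Set ℕ) : Type) ≃ ((U' : Set ℕ) : Type) := Set.BijOn.equiv f hbij
  let σ : ℕ ≃ ℕ :=
    (Equiv.Set.sumCompl (U : Set ℕ)).symm.trans ((eqS.sumCongr ec).trans
      (Equiv.Set.sumCompl (U' : Set ℕ)))
  have hσ : ∀ x ∈ U, σ x = f x := by
    intro x hx
    have hx' : x ∈ (U : Set ℕ) := hx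
    show (Equiv.Set.sumCompl (U' : Set ℕ)) ((eqS.sumCongr ec)
      ((Equiv.Set.sumCompl (U : Set ℕ)).symm x)) = f x
    rw [Equiv.Set.sumCompl_symm_apply_of_mem hx']
    rfl
  refine ⟨σ, ?_⟩
  intro p
  ext y
  simp only [Finset.mem_image]
  constructor
  · intro hy
    obtain ⟨x, hx, hfx⟩ := fsurj p y hy
    exact ⟨x, hx, by rw [hσ x (Finset.mem_biUnion.mpr ⟨p, Finset.mem_univ _, hx⟩)]; exact hfx⟩
  · rintro ⟨x, hx, rfl⟩
    rw [hσ x (Finset.mem_biUnion.mpr ⟨p, Finset.mem_univ _, hx⟩)]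
    exact fmem p x hx

lemma nat_window {w w' m x a b : ℕ} (ha : a ≤ m) (hb : b ≤ m)
    (h1 : w * m ≤ x) (h2 : x < w * m + a)
    (h3 : w' * m ≤ x) (h4 : x < w' * m + b) : w = w' := by
  rcases lt_trichotomy w w' with h | h | h
  · exfalso
    have h5 : w * m + m ≤ w' * m := by
      have := Nat.mul_le_mul_right m (show w + 1 ≤ w' by omega)
      rwa [add_mul, one_mul] at this
    have h6 : x < w' * m := lt_of_lt_of_le (lt_of_lt_of_le h2 (Nat.add_le_add_left ha _)) h5
    exact absurd h6 (not_lt.mpr h3)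
  · exact h
  · exfalso
    have h5 : w' * m + m ≤ w * m := by
      have := Nat.mul_le_mul_right m (show w' + 1 ≤ w by omega)
      rwa [add_mul, one_mul] at this
    have h6 : x < w * m := lt_of_lt_of_le (lt_of_lt_of_le h4 (Nat.add_le_add_left hb _)) h5
    exact absurd h6 (not_lt.mpr h1)

lemma window_ne {i j i' j' r : ℕ} (hj : j < r) (hj' : j' < r)
    (h : i * r + j = i' * r + j') : i = i' ∧ j = j' := by
  rcases lt_trichotomy i i' with hii | hii | hii
  · exfalso
    have h5 : i * r + r ≤ i' * r := by
      have := Nat.mul_le_mul_right r (show i + 1 ≤ i' by omega)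
      rwa [add_mul, one_mul] at this
    have hlt : i * r + j < i' * r + j' :=
      lt_of_lt_of_le (Nat.add_lt_add_left hj _) (le_trans h5 (Nat.le_add_right _ _))
    exact absurd h (Nat.ne_of_lt hlt)
  · subst hii
    exact ⟨rfl, Nat.add_left_cancel h⟩
  · exfalso
    have h5 : i' * r + r ≤ i * r := by
      have := Nat.mul_le_mul_right r (show i' + 1 ≤ i by omega)
      rwa [add_mul, one_mul] at this
    have hlt : i' * r + j' < i * r + j :=
      lt_of_lt_of_le (Nat.add_lt_add_left hj' _) (le_trans h5 (Nat.le_add_right _ _))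
    exact absurd h.symm (Nat.ne_of_lt hlt)

lemma part1 (r k : ℕ) (hr : 4 ≤ r) (z : Fin r) (hz : z.val = 0)
    (a : Fin r → Fin r → ℕ)
    (hpos : ∀ l t : Fin r, l ≠ z → t ≠ z → l < t → 0 < a l t)
    (hsum : 2 * (∑ p ∈ Finset.univ.filter
        (fun p : Fin r × Fin r => p.1 ≠ z ∧ p.2 ≠ z ∧ p.1 < p.2), a p.1 p.2)
      = (r - 2) * (k + 1))
    (hS : ∀ j : Fin r, j ≠ z →
      ∑ l ∈ (Finset.univ.erase z).erase j, (if l < j then a l j else a j l) < k + 1) :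
    ∃ L : Fin r → Finset ℕ, IsNonIntRSet r k L ∧
      2 * (Finset.univ.biUnion L).card = r * (k + 1) ∧
      (∀ l t : Fin r, l ≠ z → t ≠ z → l < t → (L l ∩ L t).card = a l t) := by
  classical
  have hzlt : ∀ i : Fin r, i ≠ z → z < i := by
    intro i hi
    have h0 : i.val ≠ 0 := fun h => hi (Fin.ext (by rw [h, hz]))
    exact Fin.lt_def.mpr (by omega)
  have hlt_ne_z : ∀ {i j : Fin r}, i < j → j ≠ z := by
    intro i j h hj
    subst hj
    have := Fin.lt_def.mp h
    omega
  let S : Fin r → ℕ := fun j => ∑ l ∈ (Finset.univ.erase z).erase j,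
    (if l < j then a l j else a j l)
  let a' : Fin r → Fin r → ℕ := fun i j => if i = z then k + 1 - S j else a i j
  let A : Fin r → Fin r → Finset ℕ := fun i j =>
    Finset.Ico ((i.val * r + j.val) * (k + 1)) ((i.val * r + j.val) * (k + 1) + a' i j)
  let B : Fin r → Fin r → Finset ℕ := fun i j => if i < j then A i j else A j i
  let L : Fin r → Finset ℕ := fun i => (Finset.univ.erase i).biUnion (fun j => B i j)
  have hS_lt : ∀ j : Fin r, j ≠ z → S j < k + 1 := fun j hj => hS j hj
  have ha'_le : ∀ i j : Fin r, i < j → a' i j ≤ k + 1 := by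
    intro i j hij
    have hjz : j ≠ z := hlt_ne_z hij
    by_cases hiz : i = z
    · simp only [a', if_pos hiz]; omega
    · simp only [a', if_neg hiz]
      have hmem : i ∈ (Finset.univ.erase z).erase j :=
        Finset.mem_erase.mpr ⟨hij.ne, Finset.mem_erase.mpr ⟨hiz, Finset.mem_univ _⟩⟩
      have hle := Finset.single_le_sum (f := fun l => if l < j then a l j else a j l)
        (fun _ _ => Nat.zero_le _) hmem
      simp only [if_pos hij] at hle
      exact le_of_lt (lt_of_le_of_lt hle (hS_lt j hjz))
  have ha'_pos : ∀ i j : Fin r, i < j → 0 < a' i j := by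
    intro i j hij
    have hjz : j ≠ z := hlt_ne_z hij
    by_cases hiz : i = z
    · simp only [a', if_pos hiz]
      have := hS_lt j hjz
      omega
    · simp only [a', if_neg hiz]
      exact hpos i j hiz hjz hij
  have hA_card : ∀ i j : Fin r, (A i j).card = a' i j := by
    intro i j; simp only [A, Nat.card_Ico]; omega
  have hA_inter : ∀ (i j i' j' : Fin r) (x : ℕ), i < j → i' < j' →
      x ∈ A i j → x ∈ A i' j' → i = i' ∧ j = j' := by
    intro i j i' j' x hij hij' hx hx'
    simp only [A, Finset.mem_Ico] at hx hx'
    have hw : i.val * r + j.val = i'.val * r + j'.val :=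
      nat_window (ha'_le i j hij) (ha'_le i' j' hij') hx.1 hx.2 hx'.1 hx'.2
    obtain ⟨e1, e2⟩ := window_ne j.isLt j'.isLt hw
    exact ⟨Fin.ext e1, Fin.ext e2⟩
  have hB_inter : ∀ (i j i' j' : Fin r) (x : ℕ), i ≠ j → i' ≠ j' →
      x ∈ B i j → x ∈ B i' j' → (i' = i ∧ j' = j) ∨ (i' = j ∧ j' = i) := by
    intro i j i' j' x hij hij' hx hx'
    rcases lt_or_gt_of_ne hij with h | h <;> rcases lt_or_gt_of_ne hij' with h' | h'
    · simp only [B, if_pos h] at hx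
      simp only [B, if_pos h'] at hx'
      obtain ⟨e1, e2⟩ := hA_inter i j i' j' x h h' hx hx'
      exact Or.inl ⟨e1.symm, e2.symm⟩
    · simp only [B, if_pos h] at hx
      simp only [B, if_neg (not_lt.mpr h'.le)] at hx'
      obtain ⟨e1, e2⟩ := hA_inter i j j' i' x h h' hx hx'
      exact Or.inr ⟨e2.symm, e1.symm⟩
    · simp only [B, if_neg (not_lt.mpr h.le)] at hx
      simp only [B, if_pos h'] at hx'
      obtain ⟨e1, e2⟩ := hA_inter j i i' j' x h h' hx hx'
      exact Or.inr ⟨e1.symm, e2.symm⟩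
    · simp only [B, if_neg (not_lt.mpr h.le)] at hx
      simp only [B, if_neg (not_lt.mpr h'.le)] at hx'
      obtain ⟨e1, e2⟩ := hA_inter j i j' i' x h h' hx hx'
      exact Or.inl ⟨e2.symm, e1.symm⟩
  have hB_card : ∀ i j : Fin r, (B i j).card = if i < j then a' i j else a' j i := by
    intro i j
    by_cases h : i < j
    · simp only [B, if_pos h, hA_card]
    · simp only [B, if_neg h, hA_card]
  have hB_sub : ∀ i j : Fin r, j ≠ i → B i j ⊆ L i := by
    intro i j hji
    exact Finset.subset_biUnion_of_mem (fun j => B i j)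
      (Finset.mem_erase.mpr ⟨hji, Finset.mem_univ _⟩)
  have hB_symm : ∀ i j : Fin r, i ≠ j → B i j = B j i := by
    intro i j h
    rcases lt_or_gt_of_ne h with h' | h'
    · simp only [B, if_pos h', if_neg (not_lt.mpr h'.le)]
    · simp only [B, if_neg (not_lt.mpr h'.le), if_pos h']
  have hInter : ∀ i j : Fin r, i ≠ j → L i ∩ L j = B i j := by
    intro i j hij
    apply Finset.Subset.antisymm
    · intro x hx
      rw [Finset.mem_inter] at hx
      obtain ⟨m, hm, hxm⟩ := Finset.mem_biUnion.mp hx.1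
      obtain ⟨m', hm', hxm'⟩ := Finset.mem_biUnion.mp hx.2
      have hmi : m ≠ i := (Finset.mem_erase.mp hm).1
      have hm'j : m' ≠ j := (Finset.mem_erase.mp hm').1
      rcases hB_inter i m j m' x (Ne.symm hmi) (Ne.symm hm'j) hxm hxm' with ⟨e1, e2⟩ | ⟨e1, e2⟩
      · exact absurd e1 hij.symm
      · rw [← e1] at hxm; exact hxm
    · intro x hx
      rw [Finset.mem_inter]
      refine ⟨hB_sub i j (Ne.symm hij) hx, hB_sub j i hij ?_⟩
      rwa [← hB_symm i j hij]
  have hL_erase_disj : ∀ i : Fin r, ∀ j ∈ Finset.univ.erase i, ∀ j' ∈ Finset.univ.erase i,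
      j ≠ j' → Disjoint (B i j) (B i j') := by
    intro i j hj j' hj' hne
    rw [Finset.disjoint_left]
    intro x hx hx'
    have hji : j ≠ i := (Finset.mem_erase.mp hj).1
    have hj'i : j' ≠ i := (Finset.mem_erase.mp hj').1
    rcases hB_inter i j i j' x (Ne.symm hji) (Ne.symm hj'i) hx hx' with ⟨e1, e2⟩ | ⟨e1, e2⟩
    · exact hne e2.symm
    · exact hji e1.symm
  have hL_card_sum : ∀ i, (L i).card = ∑ j ∈ Finset.univ.erase i, (B i j).card :=
    fun i => Finset.card_biUnion (hL_erase_disj i)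
  set E : Finset (Fin r) := Finset.univ.erase z with hE
  have hcardE : E.card = r - 1 := by
    rw [hE, Finset.card_erase_of_mem (Finset.mem_univ _), Finset.card_univ, Fintype.card_fin]
  -- double counting
  have hSS : ∑ j ∈ E, S j = (r - 2) * (k + 1) := by
    have step1 : ∑ j ∈ E, S j
        = ∑ p ∈ (E ×ˢ E).filter (fun p : Fin r × Fin r => p.1 ≠ p.2),
            (if p.1 < p.2 then a p.1 p.2 else a p.2 p.1) := by
      rw [Finset.sum_filter, Finset.sum_product, Finset.sum_comm]
      apply Finset.sum_congr rfl
      intro j hj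
      rw [← Finset.sum_filter, Finset.filter_ne']
    have hswap : ∑ p ∈ (E ×ˢ E).filter (fun p : Fin r × Fin r => p.2 < p.1), a p.2 p.1
        = ∑ p ∈ (E ×ˢ E).filter (fun p : Fin r × Fin r => p.1 < p.2), a p.1 p.2 := by
      apply Finset.sum_bij' (i := fun p _ => Prod.swap p) (j := fun p _ => Prod.swap p)
      · intro p hp
        simp only [Finset.mem_filter, Finset.mem_product] at hp ⊢
        exact ⟨⟨hp.1.2, hp.1.1⟩, hp.2⟩
      · intro p hp
        simp only [Finset.mem_filter, Finset.mem_product] at hp ⊢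
        exact ⟨⟨hp.1.2, hp.1.1⟩, hp.2⟩
      · intro p _; exact Prod.swap_swap p
      · intro p _; exact Prod.swap_swap p
      · intro p _; rfl
    have step2 : ∑ p ∈ (E ×ˢ E).filter (fun p : Fin r × Fin r => p.1 ≠ p.2),
          (if p.1 < p.2 then a p.1 p.2 else a p.2 p.1)
        = 2 * ∑ p ∈ (E ×ˢ E).filter (fun p : Fin r × Fin r => p.1 < p.2), a p.1 p.2 := by
      rw [← Finset.sum_filter_add_sum_filter_not
        ((E ×ˢ E).filter (fun p : Fin r × Fin r => p.1 ≠ p.2)) (fun p => p.1 < p.2)]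
      have e1 : ((E ×ˢ E).filter (fun p : Fin r × Fin r => p.1 ≠ p.2)).filter
          (fun p => p.1 < p.2) = (E ×ˢ E).filter (fun p : Fin r × Fin r => p.1 < p.2) := by
        rw [Finset.filter_filter]
        apply Finset.filter_congr
        intro p _
        constructor
        · rintro ⟨-, h⟩; exact h
        · intro h; exact ⟨h.ne, h⟩
      have e2 : ((E ×ˢ E).filter (fun p : Fin r × Fin r => p.1 ≠ p.2)).filter
          (fun p => ¬ p.1 < p.2) = (E ×ˢ E).filter (fun p : Fin r × Fin r => p.2 < p.1) := by
        rw [Finset.filter_filter]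
        apply Finset.filter_congr
        intro p _
        constructor
        · rintro ⟨hne, h⟩; exact lt_of_le_of_ne (not_lt.mp h) (Ne.symm hne)
        · intro h; exact ⟨(Ne.symm h.ne), not_lt.mpr h.le⟩
      rw [e1, e2]
      have e3 : ∀ p ∈ (E ×ˢ E).filter (fun p : Fin r × Fin r => p.1 < p.2),
          (if p.1 < p.2 then a p.1 p.2 else a p.2 p.1) = a p.1 p.2 := by
        intro p hp
        rw [if_pos (Finset.mem_filter.mp hp).2]
      have e4 : ∀ p ∈ (E ×ˢ E).filter (fun p : Fin r × Fin r => p.2 < p.1),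
          (if p.1 < p.2 then a p.1 p.2 else a p.2 p.1) = a p.2 p.1 := by
        intro p hp
        rw [if_neg (not_lt.mpr (Finset.mem_filter.mp hp).2.le)]
      rw [Finset.sum_congr rfl e3, Finset.sum_congr rfl e4, hswap]
      ring
    have hset : (E ×ˢ E).filter (fun p : Fin r × Fin r => p.1 < p.2)
        = Finset.univ.filter (fun p : Fin r × Fin r => p.1 ≠ z ∧ p.2 ≠ z ∧ p.1 < p.2) := by
      ext p
      simp only [Finset.mem_filter, Finset.mem_product, hE, Finset.mem_erase,
        Finset.mem_univ, and_true, true_and]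
      constructor
      · rintro ⟨⟨h1, h2⟩, h3⟩; exact ⟨h1, h2, h3⟩
      · rintro ⟨h1, h2, h3⟩; exact ⟨⟨h1, h2⟩, h3⟩
    rw [step1, step2, hset, hsum]
  have hS_le : ∀ j ∈ E, S j ≤ k + 1 := by
    intro j hj
    exact le_of_lt (hS_lt j (Finset.mem_erase.mp hj).1)
  have hsum_z : ∑ j ∈ E, a' z j = k + 1 := by
    have h1 : ∀ j ∈ E, a' z j = k + 1 - S j := fun j _ => by simp only [a', if_pos rfl]
    rw [Finset.sum_congr rfl h1]
    have h2 : ∑ j ∈ E, (k + 1 - S j) + ∑ j ∈ E, S j = E.card * (k + 1) := by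
      rw [← Finset.sum_add_distrib]
      rw [Finset.sum_congr rfl (fun j hj => Nat.sub_add_cancel (hS_le j hj))]
      rw [Finset.sum_const, smul_eq_mul]
    rw [hSS, hcardE] at h2
    have h3 : (r - 1) * (k + 1) = (k + 1) + (r - 2) * (k + 1) := by
      have h4 : r - 1 = 1 + (r - 2) := by omega
      rw [h4, add_mul, one_mul]
    rw [h3] at h2
    exact Nat.add_right_cancel h2
  have hBz_card : ∀ i : Fin r, i ≠ z → (B i z).card = k + 1 - S i := by
    intro i hiz
    have hzi : z < i := hzlt i hiz
    rw [hB_card, if_neg (not_lt.mpr hzi.le)]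
    simp only [a', if_pos rfl]
  have hL_card : ∀ i, (L i).card = k + 1 := by
    intro i
    rw [hL_card_sum i]
    by_cases hiz : i = z
    · rw [hiz]
      have hcg : ∀ j ∈ Finset.univ.erase z, (B z j).card = a' z j := by
        intro j hj
        have hzj : z < j := hzlt j (Finset.mem_erase.mp hj).1
        rw [hB_card, if_pos hzj]
      rw [Finset.sum_congr rfl hcg]
      exact hsum_z
    · have hzmem : z ∈ Finset.univ.erase i :=
        Finset.mem_erase.mpr ⟨fun h => hiz h.symm, Finset.mem_univ _⟩
      rw [← Finset.add_sum_erase _ _ hzmem, hBz_card i hiz]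
      have hrest : ∑ j ∈ (Finset.univ.erase i).erase z, (B i j).card = S i := by
        rw [Finset.erase_right_comm]
        apply Finset.sum_congr rfl
        intro j hj
        have hji : j ≠ i := (Finset.mem_erase.mp hj).1
        have hjz : j ≠ z := (Finset.mem_erase.mp (Finset.mem_erase.mp hj).2).1
        rw [hB_card]
        rcases lt_or_gt_of_ne hji with h | h
        · rw [if_neg (not_lt.mpr h.le), if_pos h]
          simp only [a', if_neg hjz]
        · rw [if_pos h, if_neg (not_lt.mpr h.le)]
          simp only [a', if_neg hiz]
      rw [hrest]
      exact Nat.sub_add_cancel (le_of_lt (hS_lt i hiz))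
  set Pall : Finset (Fin r × Fin r) :=
    Finset.univ.filter (fun p : Fin r × Fin r => p.1 < p.2) with hPall
  have hU_eq : Finset.univ.biUnion L = Pall.biUnion (fun p => A p.1 p.2) := by
    apply Finset.Subset.antisymm
    · intro x hx
      obtain ⟨i, -, hxi⟩ := Finset.mem_biUnion.mp hx
      obtain ⟨j, hj, hxj⟩ := Finset.mem_biUnion.mp hxi
      have hji : j ≠ i := (Finset.mem_erase.mp hj).1
      rcases lt_or_gt_of_ne hji with h | h
      · refine Finset.mem_biUnion.mpr ⟨(j, i), ?_, ?_⟩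
        · simp only [hPall, Finset.mem_filter, Finset.mem_univ, true_and]; exact h
        · simpa only [B, if_neg (not_lt.mpr h.le)] using hxj
      · refine Finset.mem_biUnion.mpr ⟨(i, j), ?_, ?_⟩
        · simp only [hPall, Finset.mem_filter, Finset.mem_univ, true_and]; exact h
        · simpa only [B, if_pos h] using hxj
    · intro x hx
      obtain ⟨p, hp, hxp⟩ := Finset.mem_biUnion.mp hx
      have hlt : p.1 < p.2 := (Finset.mem_filter.mp hp).2
      refine Finset.mem_biUnion.mpr ⟨p.1, Finset.mem_univ _, ?_⟩
      refine Finset.mem_biUnion.mpr ⟨p.2, Finset.mem_erase.mpr ⟨hlt.ne', Finset.mem_univ _⟩, ?_⟩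
      show x ∈ B p.1 p.2
      simpa only [B, if_pos hlt] using hxp
  have hU_card : (Finset.univ.biUnion L).card = ∑ p ∈ Pall, a' p.1 p.2 := by
    rw [hU_eq, Finset.card_biUnion]
    · exact Finset.sum_congr rfl (fun p _ => hA_card p.1 p.2)
    · intro p hp q hq hpq
      have hp' : p.1 < p.2 := (Finset.mem_filter.mp hp).2
      have hq' : q.1 < q.2 := (Finset.mem_filter.mp hq).2
      rw [Function.onFun, Finset.disjoint_left]
      intro x hxp hxq
      obtain ⟨e1, e2⟩ := hA_inter _ _ _ _ x hp' hq' hxp hxq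
      exact hpq (Prod.ext e1 e2)
  have hleft : ∑ p ∈ Pall.filter (fun p : Fin r × Fin r => p.1 = z), a' p.1 p.2
      = ∑ j ∈ E, a' z j := by
    apply Finset.sum_bij' (i := fun p _ => p.2) (j := fun j _ => ((z, j) : Fin r × Fin r))
    · intro p hp
      simp only [Finset.mem_filter, hPall, Finset.mem_univ, true_and] at hp
      rw [hE, Finset.mem_erase]
      exact ⟨hlt_ne_z hp.1, Finset.mem_univ _⟩
    · intro j hj
      simp only [Finset.mem_filter, hPall, Finset.mem_univ, true_and]
      exact ⟨hzlt j (Finset.mem_erase.mp hj).1, trivial⟩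
    · intro p hp
      simp only [Finset.mem_filter] at hp
      exact Prod.ext hp.2.symm rfl
    · intro j _; rfl
    · intro p hp
      simp only [Finset.mem_filter] at hp
      rw [hp.2]
  have hright : Pall.filter (fun p : Fin r × Fin r => ¬ p.1 = z)
      = Finset.univ.filter (fun p : Fin r × Fin r => p.1 ≠ z ∧ p.2 ≠ z ∧ p.1 < p.2) := by
    ext p
    simp only [Finset.mem_filter, hPall, Finset.mem_univ, true_and]
    constructor
    · rintro ⟨h1, h2⟩; exact ⟨h2, hlt_ne_z h1, h1⟩
    · rintro ⟨h1, h2, h3⟩; exact ⟨h3, h1⟩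
  have hPall_split : ∑ p ∈ Pall, a' p.1 p.2
      = (k + 1) + ∑ p ∈ Finset.univ.filter
          (fun p : Fin r × Fin r => p.1 ≠ z ∧ p.2 ≠ z ∧ p.1 < p.2), a p.1 p.2 := by
    rw [← Finset.sum_filter_add_sum_filter_not Pall (fun p => p.1 = z)]
    congr 1
    · rw [hleft, hsum_z]
    · rw [← hright]
      apply Finset.sum_congr rfl
      intro p hp
      have hpz : ¬ p.1 = z := (Finset.mem_filter.mp hp).2
      simp only [a', if_neg hpz]
  refine ⟨L, ⟨hL_card, ?_, ?_, ?_⟩, ?_, ?_⟩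
  · -- pairwise nonempty
    intro i j hij
    rw [hInter i j hij, ← Finset.card_pos, hB_card]
    rcases lt_or_gt_of_ne hij with h | h
    · rw [if_pos h]; exact ha'_pos i j h
    · rw [if_neg (not_lt.mpr h.le)]; exact ha'_pos j i h
  · -- triple intersections empty
    intro i j l hij hjl hil
    rw [Finset.eq_empty_iff_forall_notMem]
    intro x hx
    rw [Finset.mem_inter] at hx
    rw [hInter i j hij] at hx
    obtain ⟨m, hm, hxm⟩ := Finset.mem_biUnion.mp hx.2
    have hml : m ≠ l := (Finset.mem_erase.mp hm).1
    rcases hB_inter i j l m x hij (Ne.symm hml) hx.1 hxm with ⟨e1, e2⟩ | ⟨e1, e2⟩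
    · exact hil e1.symm
    · exact hjl e1.symm
  · -- union erase
    intro m
    apply Finset.Subset.antisymm
    · intro x hx
      obtain ⟨i, -, hxi⟩ := Finset.mem_biUnion.mp hx
      by_cases him : i = m
      · subst him
        obtain ⟨j, hj, hxj⟩ := Finset.mem_biUnion.mp hxi
        have hji : j ≠ i := (Finset.mem_erase.mp hj).1
        refine Finset.mem_biUnion.mpr ⟨j, Finset.mem_erase.mpr ⟨hji, Finset.mem_univ _⟩, ?_⟩
        have : x ∈ B j i := by rwa [← hB_symm i j (Ne.symm hji)]
        exact hB_sub j i (fun h => hji (h.symm ▸ rfl)) this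
      · exact Finset.mem_biUnion.mpr ⟨i, Finset.mem_erase.mpr ⟨him, Finset.mem_univ _⟩, hxi⟩
    · exact Finset.biUnion_subset_biUnion_of_subset_left L (Finset.erase_subset _ _)
  · -- cardinality of union
    rw [hU_card, hPall_split, Nat.mul_add, hsum]
    have h5 : 2 * (k + 1) + (r - 2) * (k + 1) = r * (k + 1) := by
      rw [← Nat.add_mul]
      congr 1
      omega
    exact h5
  · -- intersection cards
    intro l t hlz htz hlt
    rw [hInter l t hlt.ne, hB_card, if_pos hlt]
    simp only [a', if_neg hlz]

lemma exists_two {r k : ℕ} {L : Fin r → Finset ℕ} (hL : IsNonIntRSet r k L)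
    {i : Fin r} {x : ℕ} (hx : x ∈ L i) : ∃ j, j ≠ i ∧ x ∈ L j := by
  have h := hL.2.2.2 i
  have hx2 : x ∈ Finset.univ.biUnion L := mem_biUnion.mpr ⟨i, mem_univ _, hx⟩
  rw [h] at hx2
  obtain ⟨j, hj, hxj⟩ := mem_biUnion.mp hx2
  exact ⟨j, (mem_erase.mp hj).1, hxj⟩

lemma block_disj {r k : ℕ} {L : Fin r → Finset ℕ} (hL : IsNonIntRSet r k L)
    {i j i' j' : Fin r} (hij : i < j) (hij' : i' < j')
    (hne : (i, j) ≠ (i', j')) : Disjoint (L i ∩ L j) (L i' ∩ L j') := by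
  rw [Finset.disjoint_left]
  rintro x hx hx'
  rw [Finset.mem_inter] at hx hx'
  have htrip := hL.2.2.1
  by_cases h1 : i' = i ∨ i' = j
  · by_cases h2 : j' = i ∨ j' = j
    · apply hne
      have e1 : i'.val = i.val ∨ i'.val = j.val := by
        rcases h1 with h | h
        · exact Or.inl (congrArg Fin.val h)
        · exact Or.inr (congrArg Fin.val h)
      have e2 : j'.val = i.val ∨ j'.val = j.val := by
        rcases h2 with h | h
        · exact Or.inl (congrArg Fin.val h)
        · exact Or.inr (congrArg Fin.val h)
      have l1 : i.val < j.val := hij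
      have l2 : i'.val < j'.val := hij'
      have e3 : i' = i := Fin.ext (by omega)
      have e4 : j' = j := Fin.ext (by omega)
      rw [e3, e4]
    · push_neg at h2
      have hmem : x ∈ L i ∩ L j ∩ L j' := by
        rw [Finset.mem_inter, Finset.mem_inter]; exact ⟨⟨hx.1, hx.2⟩, hx'.2⟩
      rw [htrip i j j' hij.ne (Ne.symm h2.2) (Ne.symm h2.1)] at hmem
      exact absurd hmem (Finset.notMem_empty x)
  · push_neg at h1
    have hmem : x ∈ L i ∩ L j ∩ L i' := by
      rw [Finset.mem_inter, Finset.mem_inter]; exact ⟨⟨hx.1, hx.2⟩, hx'.1⟩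
    rw [htrip i j i' hij.ne (Ne.symm h1.2) (Ne.symm h1.1)] at hmem
    exact absurd hmem (Finset.notMem_empty x)

lemma cover_lemma {r k : ℕ} {L : Fin r → Finset ℕ} (hL : IsNonIntRSet r k L) (i : Fin r) :
    L i = (Finset.univ.filter
        (fun p : Fin r × Fin r => p.1 < p.2 ∧ (p.1 = i ∨ p.2 = i))).biUnion
      (fun p => L p.1 ∩ L p.2) := by
  ext x
  rw [mem_biUnion]
  constructor
  · intro hx
    obtain ⟨j, hji, hxj⟩ := exists_two hL hx
    rcases lt_or_gt_of_ne hji with h | h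
    · exact ⟨(j, i), by simp [h], Finset.mem_inter.mpr ⟨hxj, hx⟩⟩
    · exact ⟨(i, j), by simp [h], Finset.mem_inter.mpr ⟨hx, hxj⟩⟩
  · rintro ⟨p, hp, hxp⟩
    simp only [mem_filter, mem_univ, true_and] at hp
    rw [Finset.mem_inter] at hxp
    rcases hp.2 with h | h
    · rw [← h]; exact hxp.1
    · rw [← h]; exact hxp.2

lemma part2 (r k : ℕ) (hr : 4 ≤ r)
    (L L' : Fin r → Finset ℕ) (hL : IsNonIntRSet r k L) (hL' : IsNonIntRSet r k L')
    (hcard : ∀ i j : Fin r, i ≠ j → (L i ∩ L j).card = (L' i ∩ L' j).card) :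
    ∃ σ : ℕ ≃ ℕ, ∀ i, L' i = (L i).image σ := by
  classical
  let Q : Fin r × Fin r → Finset ℕ := fun p => if p.1 < p.2 then L p.1 ∩ L p.2 else ∅
  let Q' : Fin r × Fin r → Finset ℕ := fun p => if p.1 < p.2 then L' p.1 ∩ L' p.2 else ∅
  have hdisj : ∀ p q : Fin r × Fin r, p ≠ q → Disjoint (Q p) (Q q) := by
    intro p q hne
    by_cases hp : p.1 < p.2
    · by_cases hq : q.1 < q.2
      · simp only [Q, if_pos hp, if_pos hq]
        exact block_disj hL hp hq (by rwa [Prod.mk.eta, Prod.mk.eta])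
      · simp only [Q, if_pos hp, if_neg hq]; exact Finset.disjoint_empty_right _
    · simp only [Q, if_neg hp]; exact Finset.disjoint_empty_left _
  have hdisj' : ∀ p q : Fin r × Fin r, p ≠ q → Disjoint (Q' p) (Q' q) := by
    intro p q hne
    by_cases hp : p.1 < p.2
    · by_cases hq : q.1 < q.2
      · simp only [Q', if_pos hp, if_pos hq]
        exact block_disj hL' hp hq (by rwa [Prod.mk.eta, Prod.mk.eta])
      · simp only [Q', if_pos hp, if_neg hq]; exact Finset.disjoint_empty_right _
    · simp only [Q', if_neg hp]; exact Finset.disjoint_empty_left _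
  have hc : ∀ p, (Q p).card = (Q' p).card := by
    intro p
    by_cases hp : p.1 < p.2
    · simp only [Q, Q', if_pos hp]; exact hcard _ _ hp.ne
    · simp only [Q, Q', if_neg hp]
  obtain ⟨σ, hσ⟩ := glue_aux Q Q' hdisj hdisj' hc
  refine ⟨σ, fun i => ?_⟩
  rw [cover_lemma hL i, cover_lemma hL' i, Finset.biUnion_image]
  apply Finset.biUnion_congr rfl
  intro p hp
  simp only [mem_filter, mem_univ, true_and] at hp
  have h1 : L p.1 ∩ L p.2 = Q p := by simp only [Q, if_pos hp.1]
  have h2 : L' p.1 ∩ L' p.2 = Q' p := by simp only [Q', if_pos hp.1]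
  rw [h1, h2, hσ p]

/-- the classification of `r`-sets of non-intersecting type with
`|⋃ L_i| = r(k+1)/2`: they correspond, up to renumbering of the ground set, to
tuples of positive integers `(a_{l,t})_{2 ≤ l < t ≤ r}` with
`Σ a_{l,t} = (r-2)(k+1)/2` whose induced values
`a_{1,j} = k+1 - Σ_{l ≠ 1,j} a_{l,j}` are positive.  (The paper's index `1` is
the index `⟨0,_⟩` of `Fin r`; sums are doubled to avoid division.)  The first
conjunct is surjectivity (existence of an `r`-set realizing each admissible
tuple) and the second is injectivity up to relabeling of the ground set. -/
theorem stmt_5 (r k : ℕ) (hr : 4 ≤ r) (hk : r - 2 ≤ k) (heven : 2 ∣ r * (k + 1)) :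
    ((∀ a : Fin r → Fin r → ℕ,
      (∀ l t : Fin r, l ≠ (⟨0, by omega⟩ : Fin r) → t ≠ (⟨0, by omega⟩ : Fin r) →
        l < t → 0 < a l t) →
      2 * (∑ p ∈ Finset.univ.filter
            (fun p : Fin r × Fin r =>
              p.1 ≠ (⟨0, by omega⟩ : Fin r) ∧ p.2 ≠ (⟨0, by omega⟩ : Fin r) ∧ p.1 < p.2),
            a p.1 p.2) = (r - 2) * (k + 1) →
      (∀ j : Fin r, j ≠ (⟨0, by omega⟩ : Fin r) →
        ∑ l ∈ (Finset.univ.erase (⟨0, by omega⟩ : Fin r)).erase j,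
            (if l < j then a l j else a j l) < k + 1) →
      ∃ L : Fin r → Finset ℕ, IsNonIntRSet r k L ∧
        2 * (Finset.univ.biUnion L).card = r * (k + 1) ∧
        (∀ l t : Fin r, l ≠ (⟨0, by omega⟩ : Fin r) → t ≠ (⟨0, by omega⟩ : Fin r) →
          l < t → (L l ∩ L t).card = a l t))) ∧
    (∀ L L' : Fin r → Finset ℕ, IsNonIntRSet r k L → IsNonIntRSet r k L' →
      2 * (Finset.univ.biUnion L).card = r * (k + 1) →
      2 * (Finset.univ.biUnion L').card = r * (k + 1) →
      (∀ i j : Fin r, i ≠ j → (L i ∩ L j).card = (L' i ∩ L' j).card) →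
      ∃ σ : ℕ ≃ ℕ, ∀ i, L' i = (L i).image σ) := by
  constructor
  · intro a hpos hsum hS
    exact part1 r k hr (⟨0, by omega⟩ : Fin r) rfl a hpos hsum hS
  · intro L L' hL hL' _ _ hcard
    exact part2 r k hr L L' hL hL' hcard
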